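/- Let (X, dist) be a metric space, let m ≥ 1, k ≥ 1, ℓ ≥ 1 be integers, let ε ∈ (0,1), and let n ≥ 1. Let p, q : Fin n → X be two families of n points with a common coloring g : Fin n → Fin ℓ (so that the encoded bijection between the two point sets preserves colors), and suppose Σ_{t<n} dist(p t, q t)^m ≤ (ε/(2m))^m · ⨅_{c' : Fin k → X} cost_m(p, c'). Then for every c : Fin k → X and every nonempty set 𝐊 of color-constraint matrices (with respect to g), |cost_{m,𝐊}(p, g, c) − cost_{m,𝐊}(q, g, c)| ≤ ε · cost_{m,𝐊}(p, g, c); i.e., every movement-based (k, ℓ, ε)-color coreset is a (k, ε)-color coreset. -/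

import Mathlib

/-- The `k`-clustering cost of points `p` with centers `c`. -/
noncomputable def clusterCost {X : Type*} [MetricSpace X] {n k : ℕ} (m : ℕ)
    (p : Fin n → X) (c : Fin k → X) : ℝ :=
  ∑ t, (⨅ i, dist (p t) (c i)) ^ m

/-- `K` is a color-constraint matrix with respect to the coloring `g`. -/
def IsColorConstraint {n k l : ℕ} (g : Fin n → Fin l) (K : Fin k → Fin l → ℕ) : Prop :=
  ∀ j, ∑ i, K i j = (Finset.univ.filter fun t => g t = j).card

/-- An assignment `α` satisfies the color-constraint matrix `K` if cluster `i`
receives exactly `K i j` points of color `j`. -/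
def satisfiesColor {n k l : ℕ} (α : Fin n → Fin k) (g : Fin n → Fin l)
    (K : Fin k → Fin l → ℕ) : Prop :=
  ∀ i j, (Finset.univ.filter fun t => α t = i ∧ g t = j).card = K i j

/-- The `K`-constrained clustering cost for colored points. -/
noncomputable def colorCost {X : Type*} [MetricSpace X] {n k l : ℕ} (m : ℕ)
    (p : Fin n → X) (g : Fin n → Fin l) (c : Fin k → X)
    (K : Fin k → Fin l → ℕ) : ℝ :=
  sInf {x | ∃ α : Fin n → Fin k, satisfiesColor α g K ∧
    x = ∑ t, dist (p t) (c (α t)) ^ m}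

/-- The cost under a color constraint, i.e. a set `Ks` of color-constraint
matrices. -/
noncomputable def colorConstraintCost {X : Type*} [MetricSpace X] {n k l : ℕ} (m : ℕ)
    (p : Fin n → X) (g : Fin n → Fin l) (c : Fin k → X)
    (Ks : Set (Fin k → Fin l → ℕ)) : ℝ :=
  sInf {x | ∃ K ∈ Ks, x = colorCost m p g c K}


lemma key_pow {m : ℕ} (hm : 1 ≤ m) {ε A B W : ℝ} (hε0 : 0 < ε) (hε1 : ε < 1)
    (hA : 0 ≤ A) (hB : 0 ≤ B)
    (hBA : B ≤ A + W) (hAB : A ≤ B + W)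
    (hWA : W ^ m ≤ (ε / (2 * m)) ^ m * A ^ m) (hW : 0 ≤ W) :
    (1 - ε) * A ^ m ≤ B ^ m ∧ B ^ m ≤ (1 + ε) * A ^ m := by
  have hm1 : (1:ℝ) ≤ m := by exact_mod_cast hm
  have hm0 : (0:ℝ) < m := by linarith
  have hmne : m ≠ 0 := by omega
  set x := ε / (2 * m) with hxdef
  have hx0 : 0 < x := by positivity
  have hxh : m * x = ε / 2 := by rw [hxdef]; field_simp
  have hxlt : x < 1 / 2 := by
    rw [hxdef, div_lt_div_iff₀ (by positivity) (by norm_num)]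
    linarith
  have hWA' : W ≤ x * A := by
    have h1 : W ^ m ≤ (x * A) ^ m := by rw [mul_pow]; exact hWA
    exact (pow_le_pow_iff_left₀ hW (by positivity) hmne).mp h1
  -- Bernoulli
  have hQ : 1 - ε / 2 ≤ (1 - x) ^ m := by
    have := one_add_mul_le_pow (a := -x) (by linarith) m
    have h2 : 1 + (m:ℝ) * (-x) = 1 - ε / 2 := by rw [mul_neg, hxh]; ring
    rw [h2, ← sub_eq_add_neg] at this
    exact this
  have hPQ : (1 + x) ^ m * (1 - x) ^ m ≤ 1 := by
    rw [← mul_pow]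
    exact pow_le_one₀ (by nlinarith) (by nlinarith)
  have hP : (1 + x) ^ m ≤ 1 + ε := by
    by_contra h
    push_neg at h
    have hQ0 : 0 < 1 - ε / 2 := by linarith
    nlinarith
  constructor
  · have h3 : A * (1 - x) ≤ B := by nlinarith
    have h4 : (A * (1 - x)) ^ m ≤ B ^ m := pow_le_pow_left₀ (by nlinarith) h3 m
    rw [mul_pow] at h4
    have h5 : (1 - ε) * A ^ m ≤ (1 - ε / 2) * A ^ m := by
      have := pow_nonneg hA m; nlinarith
    have h6 : (1 - ε / 2) * A ^ m ≤ (1 - x) ^ m * A ^ m :=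
      mul_le_mul_of_nonneg_right hQ (pow_nonneg hA m)
    calc (1 - ε) * A ^ m ≤ (1 - x) ^ m * A ^ m := h5.trans h6
      _ = A ^ m * (1 - x) ^ m := by ring
      _ ≤ B ^ m := h4
  · have h3 : B ≤ A * (1 + x) := by nlinarith
    have h4 : B ^ m ≤ (A * (1 + x)) ^ m := pow_le_pow_left₀ hB h3 m
    rw [mul_pow] at h4
    calc B ^ m ≤ A ^ m * (1 + x) ^ m := h4
      _ ≤ A ^ m * (1 + ε) := mul_le_mul_of_nonneg_left hP (pow_nonneg hA m)
      _ = (1 + ε) * A ^ m := by ring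

lemma norm_pow_eq {n m : ℕ} (hmne : m ≠ 0) (f : Fin n → ℝ) (hf : ∀ t, 0 ≤ f t) :
    ((∑ t, |f t| ^ (m:ℝ)) ^ (1/(m:ℝ))) ^ m = ∑ t, f t ^ m := by
  have hmR : (m:ℝ) ≠ 0 := Nat.cast_ne_zero.mpr hmne
  have hS : (0:ℝ) ≤ ∑ t, |f t| ^ (m:ℝ) := by positivity
  rw [← Real.rpow_natCast (((∑ t, |f t| ^ (m:ℝ)) ^ (1/(m:ℝ)))) m, ← Real.rpow_mul hS]
  rw [one_div, inv_mul_cancel₀ hmR, Real.rpow_one]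
  refine Finset.sum_congr rfl fun t _ => ?_
  rw [abs_of_nonneg (hf t), Real.rpow_natCast]

lemma sum_pow_bounds {X : Type*} [MetricSpace X] {n m : ℕ} (hm : 1 ≤ m) {ε : ℝ}
    (hε0 : 0 < ε) (hε1 : ε < 1) (p q r : Fin n → X)
    (hmv : ∑ t, dist (p t) (q t) ^ m ≤ (ε / (2 * m)) ^ m * ∑ t, dist (p t) (r t) ^ m) :
    (1 - ε) * ∑ t, dist (p t) (r t) ^ m ≤ ∑ t, dist (q t) (r t) ^ m ∧
      ∑ t, dist (q t) (r t) ^ m ≤ (1 + ε) * ∑ t, dist (p t) (r t) ^ m := by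
  have hmne : m ≠ 0 := by omega
  have hmR : (1:ℝ) ≤ (m:ℝ) := by exact_mod_cast hm
  set u : Fin n → ℝ := fun t => dist (p t) (r t) with hu
  set v : Fin n → ℝ := fun t => dist (q t) (r t) with hv
  set w : Fin n → ℝ := fun t => dist (p t) (q t) with hw
  set N : (Fin n → ℝ) → ℝ := fun f => (∑ t, |f t| ^ (m:ℝ)) ^ (1/(m:ℝ)) with hN
  have hNnn : ∀ f : Fin n → ℝ, 0 ≤ N f := fun f => by positivity
  have hAm : N u ^ m = ∑ t, dist (p t) (r t) ^ m :=
    norm_pow_eq hmne u fun t => dist_nonneg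
  have hBm : N v ^ m = ∑ t, dist (q t) (r t) ^ m :=
    norm_pow_eq hmne v fun t => dist_nonneg
  have hWm : N w ^ m = ∑ t, dist (p t) (q t) ^ m :=
    norm_pow_eq hmne w fun t => dist_nonneg
  -- monotonicity helper
  have hmono : ∀ f g : Fin n → ℝ, (∀ t, |f t| ≤ |g t|) → N f ≤ N g := by
    intro f g h
    refine Real.rpow_le_rpow (by positivity) ?_ (by positivity)
    exact Finset.sum_le_sum fun t _ =>
      Real.rpow_le_rpow (abs_nonneg _) (h t) (by positivity)
  -- Minkowski-based triangle bounds
  have tri : ∀ f g : Fin n → ℝ, (∀ t, |f t - g t| ≤ |w t|) → N f ≤ N g + N w := by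
    intro f g h
    have h1 : N f ≤ N g + N (f - g) := by
      have := Real.Lp_add_le (Finset.univ) g (f - g) (p := (m:ℝ)) hmR
      simp only [Pi.sub_apply, add_sub_cancel] at this
      exact this
    have h2 : N (f - g) ≤ N w := hmono _ _ fun t => by
      simpa using h t
    linarith
  have hBA : N v ≤ N u + N w := tri v u fun t => by
    rw [abs_of_nonneg dist_nonneg (a := w t)]
    simpa [hv, hu, hw, dist_comm (q t) (p t)] using abs_dist_sub_le (q t) (p t) (r t)
  have hAB : N u ≤ N v + N w := tri u v fun t => by
    rw [abs_of_nonneg dist_nonneg (a := w t)]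
    simpa [hv, hu, hw] using abs_dist_sub_le (p t) (q t) (r t)
  have hWA : N w ^ m ≤ (ε / (2 * m)) ^ m * N u ^ m := by rw [hWm, hAm]; exact hmv
  have := key_pow hm hε0 hε1 (hNnn u) (hNnn v) hBA hAB hWA (hNnn w)
  rwa [hAm, hBm] at this

section Main

variable {X : Type*} [MetricSpace X] {n k l m : ℕ}

lemma colorCost_set_finite (p : Fin n → X) (g : Fin n → Fin l) (c : Fin k → X)
    (K : Fin k → Fin l → ℕ) :
    {x : ℝ | ∃ α : Fin n → Fin k, satisfiesColor α g K ∧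
      x = ∑ t, dist (p t) (c (α t)) ^ m}.Finite := by
  apply Set.Finite.subset
    (Set.finite_range fun α : Fin n → Fin k => ∑ t, dist (p t) (c (α t)) ^ m)
  rintro x ⟨α, -, rfl⟩
  exact ⟨α, rfl⟩

lemma colorCost_nonneg (p : Fin n → X) (g : Fin n → Fin l) (c : Fin k → X)
    (K : Fin k → Fin l → ℕ) : 0 ≤ colorCost m p g c K := by
  apply Real.sInf_nonneg
  rintro x ⟨α, -, rfl⟩
  positivity

lemma colorCost_bounds (hm : 1 ≤ m) (hk : 1 ≤ k) (hn : 1 ≤ n)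
    {ε : ℝ} (hε0 : 0 < ε) (hε1 : ε < 1) (p q : Fin n → X) (g : Fin n → Fin l)
    (hmove : ∑ t, dist (p t) (q t) ^ m ≤
      (ε / (2 * m)) ^ m * ⨅ c' : Fin k → X, clusterCost m p c')
    (c : Fin k → X) (K : Fin k → Fin l → ℕ) :
    (1 - ε) * colorCost m p g c K ≤ colorCost m q g c K ∧
      colorCost m q g c K ≤ (1 + ε) * colorCost m p g c K := by
  have hXne : Nonempty X := ⟨p ⟨0, hn⟩⟩
  have hkne : Nonempty (Fin k) := ⟨⟨0, hk⟩⟩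
  -- the unconstrained optimum is at most the cost of any assignment
  have hopt : ∀ α : Fin n → Fin k,
      (⨅ c' : Fin k → X, clusterCost m p c') ≤ ∑ t, dist (p t) (c (α t)) ^ m := by
    intro α
    have hbdd : BddBelow (Set.range fun c' : Fin k → X => clusterCost m p c') := by
      refine ⟨0, ?_⟩
      rintro y ⟨c', rfl⟩
      refine Finset.sum_nonneg fun t _ => ?_
      have : 0 ≤ ⨅ i, dist (p t) (c' i) := Real.iInf_nonneg fun i => dist_nonneg
      positivity
    refine le_trans (ciInf_le hbdd c) ?_
    refine Finset.sum_le_sum fun t _ => ?_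
    have h0 : 0 ≤ ⨅ i, dist (p t) (c i) := Real.iInf_nonneg fun i => dist_nonneg
    refine pow_le_pow_left₀ h0 ?_ m
    exact ciInf_le ⟨0, by rintro y ⟨i, rfl⟩; exact dist_nonneg⟩ (α t)
  have hmv : ∀ α : Fin n → Fin k,
      ∑ t, dist (p t) (q t) ^ m ≤ (ε / (2 * m)) ^ m * ∑ t, dist (p t) (c (α t)) ^ m :=
    fun α => hmove.trans (mul_le_mul_of_nonneg_left (hopt α) (by positivity))
  by_cases hA : ∃ α : Fin n → Fin k, satisfiesColor α g K
  · obtain ⟨α0, hα0⟩ := hA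
    have hfinp := colorCost_set_finite (m := m) p g c K
    have hfinq := colorCost_set_finite (m := m) q g c K
    have hnep : {x : ℝ | ∃ α : Fin n → Fin k, satisfiesColor α g K ∧
        x = ∑ t, dist (p t) (c (α t)) ^ m}.Nonempty := ⟨_, α0, hα0, rfl⟩
    have hneq : {x : ℝ | ∃ α : Fin n → Fin k, satisfiesColor α g K ∧
        x = ∑ t, dist (q t) (c (α t)) ^ m}.Nonempty := ⟨_, α0, hα0, rfl⟩
    obtain ⟨α1, hα1, hp1⟩ := hnep.csInf_mem hfinp
    obtain ⟨α2, hα2, hq2⟩ := hneq.csInf_mem hfinq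
    constructor
    · -- lower bound
      have h1 := (sum_pow_bounds hm hε0 hε1 p q (fun t => c (α2 t)) (hmv α2)).1
      have h2 : colorCost m p g c K ≤ ∑ t, dist (p t) (c (α2 t)) ^ m :=
        csInf_le hfinp.bddBelow ⟨α2, hα2, rfl⟩
      have h3 : (1 - ε) * colorCost m p g c K ≤
          (1 - ε) * ∑ t, dist (p t) (c (α2 t)) ^ m :=
        mul_le_mul_of_nonneg_left h2 (by linarith)
      rw [colorCost, colorCost, ← hq2] at *
      linarith
    · -- upper bound
      have h1 := (sum_pow_bounds hm hε0 hε1 p q (fun t => c (α1 t)) (hmv α1)).2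
      have h2 : colorCost m q g c K ≤ ∑ t, dist (q t) (c (α1 t)) ^ m :=
        csInf_le hfinq.bddBelow ⟨α1, hα1, rfl⟩
      rw [colorCost, colorCost, ← hp1] at *
      linarith
  · have he : ∀ (pp : Fin n → X), {x : ℝ | ∃ α : Fin n → Fin k, satisfiesColor α g K ∧
        x = ∑ t, dist (pp t) (c (α t)) ^ m} = ∅ := by
      intro pp
      ext x
      simp only [Set.mem_setOf_eq, Set.mem_empty_iff_false, iff_false, not_exists]
      rintro α ⟨hα, -⟩
      exact hA ⟨α, hα⟩
    simp only [colorCost, he, Real.sInf_empty]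
    norm_num

end Main

theorem movementBased_color_coreset_is_color_coreset {X : Type*} [MetricSpace X]
    {n k l m : ℕ} (hm : 1 ≤ m) (hk : 1 ≤ k) (hl : 1 ≤ l) (hn : 1 ≤ n)
    {ε : ℝ} (hε : ε ∈ Set.Ioo (0 : ℝ) 1)
    (p q : Fin n → X) (g : Fin n → Fin l)
    (hmove : ∑ t, dist (p t) (q t) ^ m ≤
      (ε / (2 * m)) ^ m * ⨅ c' : Fin k → X, clusterCost m p c') :
    ∀ c : Fin k → X, ∀ Ks : Set (Fin k → Fin l → ℕ), Ks.Nonempty →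
      (∀ K ∈ Ks, IsColorConstraint g K) →
      |colorConstraintCost m p g c Ks - colorConstraintCost m q g c Ks| ≤
        ε * colorConstraintCost m p g c Ks := by
  obtain ⟨hε0, hε1⟩ := hε
  intro c Ks hKs hKsc
  have hTfin : ∀ pp : Fin n → X,
      {x : ℝ | ∃ K ∈ Ks, x = colorCost m pp g c K}.Finite := by
    intro pp
    apply Set.Finite.subset
      ((Set.finite_range fun α : Fin n → Fin k =>
        ∑ t, dist (pp t) (c (α t)) ^ m).insert 0)
    rintro x ⟨K, -, rfl⟩
    by_cases hA : {x : ℝ | ∃ α : Fin n → Fin k, satisfiesColor α g K ∧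
        x = ∑ t, dist (pp t) (c (α t)) ^ m}.Nonempty
    · obtain ⟨α, -, hx⟩ := hA.csInf_mem (colorCost_set_finite pp g c K)
      exact Set.mem_insert_of_mem _ ⟨α, hx.symm⟩
    · rw [Set.not_nonempty_iff_eq_empty] at hA
      rw [colorCost, hA, Real.sInf_empty]
      exact Set.mem_insert _ _
  have hTne : ∀ pp : Fin n → X,
      {x : ℝ | ∃ K ∈ Ks, x = colorCost m pp g c K}.Nonempty := by
    intro pp
    obtain ⟨K, hK⟩ := hKs
    exact ⟨_, K, hK, rfl⟩
  obtain ⟨K0, hK0, hcP⟩ := (hTne p).csInf_mem (hTfin p)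
  obtain ⟨K1, hK1, hcQ⟩ := (hTne q).csInf_mem (hTfin q)
  have hb0 := colorCost_bounds hm hk hn hε0 hε1 p q g hmove c K0
  have hb1 := colorCost_bounds hm hk hn hε0 hε1 p q g hmove c K1
  have hcP' : colorConstraintCost m p g c Ks = colorCost m p g c K0 := hcP
  have hcQ' : colorConstraintCost m q g c Ks = colorCost m q g c K1 := hcQ
  have hup : colorConstraintCost m q g c Ks ≤ (1 + ε) * colorConstraintCost m p g c Ks := by
    have h1 : colorConstraintCost m q g c Ks ≤ colorCost m q g c K0 :=
      csInf_le (hTfin q).bddBelow ⟨K0, hK0, rfl⟩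
    rw [hcP']
    exact h1.trans hb0.2
  have hlo : (1 - ε) * colorConstraintCost m p g c Ks ≤ colorConstraintCost m q g c Ks := by
    have h1 : colorConstraintCost m p g c Ks ≤ colorCost m p g c K1 :=
      csInf_le (hTfin p).bddBelow ⟨K1, hK1, rfl⟩
    have h2 : (1 - ε) * colorConstraintCost m p g c Ks ≤ (1 - ε) * colorCost m p g c K1 :=
      mul_le_mul_of_nonneg_left h1 (by linarith)
    rw [hcQ']
    linarith [hb1.1]
  have hP0 : 0 ≤ colorConstraintCost m p g c Ks := by
    rw [hcP']
    exact colorCost_nonneg p g c K0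
  rw [abs_sub_le_iff]
  constructor <;> nlinarith
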